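/- With x and z as in the quasi-dyadic construction, the GRS code GRS_r(x, z) is quasi-dyadic of order 2^γ: for each b ∈ G, the induced coordinate permutation σ_b maps GRS_r(x,z) to itself. -/
import Mathlib


open Polynomial

/-- The generalized Reed-Solomon code, over an arbitrary finite coordinate set. -/
def GRS {F : Type*} [Field F] {ι : Type*} [Fintype ι] (k : ℕ) (x y : ι → F) :
    Set (ι → F) :=
  {v | ∃ f : F[X], f.degree < k ∧ ∀ i, v i = y i * f.eval (x i)}

/-- With the quasi-dyadic support `x(i,j) = τ_i + g_j` and multiplier `z(i,j) = y_i`,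
the code `GRS_r(x,z)` is quasi-dyadic: it is invariant under the coordinate permutation
`σ_b` induced by translation by any `b ∈ G`. -/
theorem grs_quasi_dyadic {F : Type*} [Field F] [CharP F 2]
    (q s : ℕ) (hq : q = 2 ^ s) (γ n₀ : ℕ)
    (G : AddSubgroup F) (hGcard : Nat.card G = 2 ^ γ)
    (g : Fin (2 ^ γ) ≃ G)
    (τ : Fin n₀ → F)
    (hτ : ∀ (i i' : Fin n₀) (a b : G), τ i + (a : F) = τ i' + (b : F) → i = i')
    (y : Fin n₀ → F) (hy : ∀ i, y i ≠ 0) (r : ℕ)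
    (b : F) (hb : b ∈ G) (σ : Equiv.Perm (Fin n₀ × Fin (2 ^ γ)))
    (hσ : ∀ p, τ (σ p).1 + (g (σ p).2 : F) = (τ p.1 + (g p.2 : F)) + b) :
    ∀ c ∈ GRS r (fun p : Fin n₀ × Fin (2 ^ γ) => τ p.1 + (g p.2 : F))
        (fun p => y p.1),
      (fun p => c (σ p)) ∈ GRS r (fun p : Fin n₀ × Fin (2 ^ γ) => τ p.1 + (g p.2 : F))
        (fun p => y p.1) := by
  rintro c ⟨f, hdeg, hc⟩
  refine ⟨f.comp (X + C b), ?_, ?_⟩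
  · have hd : (f.comp (X + C b)).degree = f.degree := by
      rcases eq_or_ne f 0 with rfl | h
      · simp
      · have h2 : f.comp (X + C b) ≠ 0 := fun hc => h (comp_X_add_C_eq_zero_iff.mp hc)
        rw [degree_eq_natDegree h, degree_eq_natDegree h2, natDegree_comp,
          natDegree_X_add_C, mul_one]
    rw [hd]; exact hdeg
  · intro p
    have h1 : (σ p).1 = p.1 := by
      have := hσ p
      have hmem : (g p.2 : F) + b ∈ G := G.add_mem (g p.2).2 hb
      exact hτ _ _ (g (σ p).2) ⟨_, hmem⟩ (by rw [this]; ring)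
    simp only [hc (σ p), h1, Polynomial.eval_comp, Polynomial.eval_add,
      Polynomial.eval_X, Polynomial.eval_C]
    have h2 := hσ p
    rw [h1] at h2
    rw [h2]
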